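/- arXiv:2308.14837 — 2 statements merged into one kernel-verified Lean document; each statement's English description precedes it below -/
import Mathlib

section
/- Let 𝒳 = {x_1,…,x_m} be a multiset of non-negative reals and let X_1,…,X_n (n ≤ m) be obtained by sampling n elements uniformly at random without replacement from 𝒳. Then X_1,…,X_n are negatively associated. -/
set_option linter.unusedSectionVars false
set_option linter.unusedVariables false
set_option maxHeartbeats 1000000

/-- `f` depends only on the coordinates indexed by `S`. -/
def DependsOnCoords {n : ℕ} (f : (Fin n → ℝ) → ℝ) (S : Finset (Fin n)) : Prop :=
  ∀ x y : Fin n → ℝ, (∀ i ∈ S, x i = y i) → f x = f y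

namespace NAaux

open Finset

def DepOn {α : Type} (f : (α → ℝ) → ℝ) (S : Finset α) : Prop :=
  ∀ u v : α → ℝ, (∀ i ∈ S, u i = v i) → f u = f v

lemma mono_le {α : Type} {f : (α → ℝ) → ℝ} {S : Finset α}
    (hf : Monotone f) (hS : DepOn f S) {z w : α → ℝ}
    (h : ∀ i ∈ S, z i ≤ w i) : f z ≤ f w := by
  have h1 : f z ≤ f (fun i => max (z i) (w i)) :=
    hf (fun i => le_max_left _ _)
  have h2 : f (fun i => max (z i) (w i)) = f w :=
    hS _ _ (fun i hi => max_eq_right (h i hi))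
  linarith

lemma algebra1 {ι : Type} [Fintype ι] (S T : Finset ι) (a b p : ι → ℝ) (a0 b0 p0 c M N : ℝ)
    (hST : Disjoint S T) (hc : 0 < c)
    (hN : N = (c + (Fintype.card ι : ℝ)) * M)
    (hIH0 : (c * M) * p0 ≤ a0 * b0)
    (hIHk : ∀ k, M * p k ≤ a k * b k)
    (hfle : ∀ k ∈ S, a0 ≤ c * a k) (hfeq : ∀ k ∉ S, a0 = c * a k)
    (hgle : ∀ k ∈ T, b0 ≤ c * b k) (hgeq : ∀ k ∉ T, b0 = c * b k) :
    N * (p0 + ∑ k, p k) ≤ (a0 + ∑ k, a k) * (b0 + ∑ k, b k) := by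
  have hc2 : 0 < c ^ 2 := by positivity
  set D := (Fintype.card ι : ℝ) with hD
  have hD0 : 0 ≤ D := by positivity
  set u : ι → ℝ := fun k => c * a k - a0 with hu
  set v : ι → ℝ := fun k => c * b k - b0 with hv
  have hu0 : ∀ k, 0 ≤ u k := by
    intro k
    by_cases hk : k ∈ S
    · have := hfle k hk; simp only [hu]; linarith
    · have := hfeq k hk; simp only [hu]; linarith
  have hv0 : ∀ k, 0 ≤ v k := by
    intro k
    by_cases hk : k ∈ T
    · have := hgle k hk; simp only [hv]; linarith
    · have := hgeq k hk; simp only [hv]; linarith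
  have huv : ∀ k, u k * v k = 0 := by
    intro k
    by_cases hk : k ∈ S
    · have hkT : k ∉ T := Finset.disjoint_left.mp hST hk
      have h1 := hgeq k hkT
      have : v k = 0 := by simp only [hv]; linarith
      rw [this, mul_zero]
    · have h1 := hfeq k hk
      have : u k = 0 := by simp only [hu]; linarith
      rw [this, zero_mul]
  set U := ∑ k, u k with hUdef
  set V := ∑ k, v k with hVdef
  have hU : 0 ≤ U := Finset.sum_nonneg fun k _ => hu0 k
  have hV : 0 ≤ V := Finset.sum_nonneg fun k _ => hv0 k
  have hcA : c * (∑ k, a k) = D * a0 + U := by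
    rw [Finset.mul_sum, hUdef]
    have h1 : ∀ k : ι, c * a k = a0 + u k := fun k => by simp only [hu]; ring
    rw [Finset.sum_congr rfl (fun k _ => h1 k), Finset.sum_add_distrib, Finset.sum_const,
      Finset.card_univ, nsmul_eq_mul]
  have hcB : c * (∑ k, b k) = D * b0 + V := by
    rw [Finset.mul_sum, hVdef]
    have h1 : ∀ k : ι, c * b k = b0 + v k := fun k => by simp only [hv]; ring
    rw [Finset.sum_congr rfl (fun k _ => h1 k), Finset.sum_add_distrib, Finset.sum_const,
      Finset.card_univ, nsmul_eq_mul]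
  have hsum : c ^ 2 * M * (∑ k, p k) ≤ D * (a0 * b0) + a0 * V + b0 * U := by
    have step1 : c ^ 2 * M * (∑ k, p k) = ∑ k, c ^ 2 * (M * p k) := by
      rw [Finset.mul_sum]; exact Finset.sum_congr rfl fun k _ => by ring
    have step2 : ∀ k : ι, c ^ 2 * (M * p k) ≤ a0 * b0 + a0 * v k + b0 * u k := by
      intro k
      have h1 : c ^ 2 * (M * p k) ≤ c ^ 2 * (a k * b k) :=
        mul_le_mul_of_nonneg_left (hIHk k) (le_of_lt hc2)
      have h2 : c ^ 2 * (a k * b k) = a0 * b0 + a0 * v k + b0 * u k + u k * v k := by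
        simp only [hu, hv]; ring
      rw [h2, huv k, add_zero] at h1
      exact h1
    calc c ^ 2 * M * (∑ k, p k) = ∑ k, c ^ 2 * (M * p k) := step1
      _ ≤ ∑ k, (a0 * b0 + a0 * v k + b0 * u k) := Finset.sum_le_sum fun k _ => step2 k
      _ = D * (a0 * b0) + a0 * V + b0 * U := by
          rw [Finset.sum_add_distrib, Finset.sum_add_distrib, Finset.sum_const,
            Finset.card_univ, nsmul_eq_mul, ← Finset.mul_sum, ← Finset.mul_sum, hUdef, hVdef]
  have h0 : c ^ 2 * M * p0 ≤ c * (a0 * b0) := by nlinarith [hIH0]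
  have hX : (0 : ℝ) ≤ c + D := by positivity
  have main : (c + D) * (c ^ 2 * M * (p0 + ∑ k, p k))
      ≤ (c + D) * ((c + D) * (a0 * b0) + a0 * V + b0 * U) := by
    apply mul_le_mul_of_nonneg_left _ hX
    nlinarith [hsum, h0]
  have hrhs : c ^ 2 * ((a0 + ∑ k, a k) * (b0 + ∑ k, b k))
      = ((c + D) * a0 + U) * ((c + D) * b0 + V) := by
    have e1 : c * (a0 + ∑ k, a k) = (c + D) * a0 + U := by rw [mul_add, hcA]; ring
    have e2 : c * (b0 + ∑ k, b k) = (c + D) * b0 + V := by rw [mul_add, hcB]; ring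
    calc c ^ 2 * ((a0 + ∑ k, a k) * (b0 + ∑ k, b k))
        = (c * (a0 + ∑ k, a k)) * (c * (b0 + ∑ k, b k)) := by ring
      _ = _ := by rw [e1, e2]
  have expand : (c + D) * ((c + D) * (a0 * b0) + a0 * V + b0 * U) + U * V
      = ((c + D) * a0 + U) * ((c + D) * b0 + V) := by ring
  have final : c ^ 2 * (N * (p0 + ∑ k, p k)) ≤ c ^ 2 * ((a0 + ∑ k, a k) * (b0 + ∑ k, b k)) := by
    rw [hrhs, ← expand, hN]
    calc c ^ 2 * ((c + D) * M * (p0 + ∑ k, p k))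
        = (c + D) * (c ^ 2 * M * (p0 + ∑ k, p k)) := by ring
      _ ≤ (c + D) * ((c + D) * (a0 * b0) + a0 * V + b0 * U) := main
      _ ≤ _ := le_add_of_nonneg_right (mul_nonneg hU hV)
  exact le_of_mul_le_mul_left final hc2

lemma algebra2 {ι : Type} [Fintype ι] (S T : Finset ι) (a b p : ι → ℝ) (M N : ℝ) (k0 k1 : ι)
    (hk0T : k0 ∈ T) (hk1S : k1 ∈ S) (hST : Disjoint S T)
    (hN : N = (Fintype.card ι : ℝ) * M)
    (hIHk : ∀ k, M * p k ≤ a k * b k)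
    (hfle : ∀ k ∈ S, ∀ k' ∉ S, a k' ≤ a k) (hfeq : ∀ k ∉ S, ∀ k' ∉ S, a k' = a k)
    (hgle : ∀ k ∈ T, ∀ k' ∉ T, b k' ≤ b k) (hgeq : ∀ k ∉ T, ∀ k' ∉ T, b k' = b k) :
    N * (∑ k, p k) ≤ (∑ k, a k) * (∑ k, b k) := by
  have hk0S : k0 ∉ S := Finset.disjoint_right.mp hST hk0T
  have hk1T : k1 ∉ T := Finset.disjoint_left.mp hST hk1S
  set D := (Fintype.card ι : ℝ) with hD
  have hD0 : 0 ≤ D := by positivity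
  set A := a k0 with hA
  set B := b k1 with hB
  set u : ι → ℝ := fun k => a k - A with hu
  set v : ι → ℝ := fun k => b k - B with hv
  have hu0 : ∀ k, 0 ≤ u k := by
    intro k
    by_cases hk : k ∈ S
    · have := hfle k hk k0 hk0S; simp only [hu]; linarith
    · have := hfeq k hk k0 hk0S; simp only [hu]; linarith
  have hv0 : ∀ k, 0 ≤ v k := by
    intro k
    by_cases hk : k ∈ T
    · have := hgle k hk k1 hk1T; simp only [hv]; linarith
    · have := hgeq k hk k1 hk1T; simp only [hv]; linarith
  have huv : ∀ k, u k * v k = 0 := by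
    intro k
    by_cases hk : k ∈ S
    · have hkT : k ∉ T := Finset.disjoint_left.mp hST hk
      have h1 := hgeq k hkT k1 hk1T
      have : v k = 0 := by simp only [hv]; linarith
      rw [this, mul_zero]
    · have h1 := hfeq k hk k0 hk0S
      have : u k = 0 := by simp only [hu]; linarith
      rw [this, zero_mul]
  set U := ∑ k, u k with hUdef
  set V := ∑ k, v k with hVdef
  have hU : 0 ≤ U := Finset.sum_nonneg fun k _ => hu0 k
  have hV : 0 ≤ V := Finset.sum_nonneg fun k _ => hv0 k
  have hcA : (∑ k, a k) = D * A + U := by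
    rw [hUdef]
    have h1 : ∀ k : ι, a k = A + u k := fun k => by simp only [hu]; ring
    rw [Finset.sum_congr rfl (fun k _ => h1 k), Finset.sum_add_distrib, Finset.sum_const,
      Finset.card_univ, nsmul_eq_mul]
  have hcB : (∑ k, b k) = D * B + V := by
    rw [hVdef]
    have h1 : ∀ k : ι, b k = B + v k := fun k => by simp only [hv]; ring
    rw [Finset.sum_congr rfl (fun k _ => h1 k), Finset.sum_add_distrib, Finset.sum_const,
      Finset.card_univ, nsmul_eq_mul]
  have hsum : M * (∑ k, p k) ≤ D * (A * B) + A * V + B * U := by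
    have step2 : ∀ k : ι, M * p k ≤ A * B + A * v k + B * u k := by
      intro k
      have h1 := hIHk k
      have h2 : a k * b k = A * B + A * v k + B * u k + u k * v k := by
        simp only [hu, hv]; ring
      rw [h2, huv k, add_zero] at h1
      exact h1
    calc M * (∑ k, p k) = ∑ k, M * p k := Finset.mul_sum _ _ _
      _ ≤ ∑ k, (A * B + A * v k + B * u k) := Finset.sum_le_sum fun k _ => step2 k
      _ = D * (A * B) + A * V + B * U := by
          rw [Finset.sum_add_distrib, Finset.sum_add_distrib, Finset.sum_const,
            Finset.card_univ, nsmul_eq_mul, ← Finset.mul_sum, ← Finset.mul_sum, hUdef, hVdef]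
  calc N * (∑ k, p k) = D * (M * (∑ k, p k)) := by rw [hN]; ring
    _ ≤ D * (D * (A * B) + A * V + B * U) := mul_le_mul_of_nonneg_left hsum hD0
    _ ≤ D * (D * (A * B) + A * V + B * U) + U * V := le_add_of_nonneg_right (mul_nonneg hU hV)
    _ = (D * A + U) * (D * B + V) := by ring
    _ = _ := by rw [hcA, hcB]



variable {α β : Type} [Fintype α] [DecidableEq α] [Fintype β] [DecidableEq β]

noncomputable def C0 (α : Type) [Fintype α] [DecidableEq α] (jm : β) :
    Finset (α ↪ β) := Finset.univ.filter (fun π => ∀ i, π i ≠ jm)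

noncomputable def CK (jm : β) (k : α) : Finset (α ↪ β) :=
  Finset.univ.filter (fun π => π k = jm)

lemma mem_C0 {jm : β} {π : α ↪ β} : π ∈ C0 α jm ↔ ∀ i, π i ≠ jm := by simp [C0]

lemma mem_CK {jm : β} {k : α} {π : α ↪ β} : π ∈ CK jm k ↔ π k = jm := by simp [CK]

lemma split_sum (jm : β) (F : (α ↪ β) → ℝ) :
    ∑ π : α ↪ β, F π = ∑ π ∈ C0 α jm, F π + ∑ k : α, ∑ π ∈ CK jm k, F π := by
  classical
  rw [← Finset.sum_filter_add_sum_filter_not Finset.univ (fun π : α ↪ β => ∀ i, π i ≠ jm) F]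
  congr 1
  have h2 : Finset.univ.filter (fun π : α ↪ β => ¬ ∀ i, π i ≠ jm)
      = Finset.univ.biUnion (fun k => CK jm k) := by
    ext π
    simp [CK]
  rw [h2, Finset.sum_biUnion]
  intro k _ k' _ hkk'
  simp only [Function.onFun]
  rw [Finset.disjoint_left]
  intro π hπ hπ'
  rw [mem_CK] at hπ hπ'
  exact hkk' (π.injective (hπ.trans hπ'.symm))

/-- restriction to codomain avoiding jm -/
noncomputable def res0 (jm : β) (π : α ↪ β) (hπ : π ∈ C0 α jm) : α ↪ {j : β // j ≠ jm} :=
  ⟨fun i => ⟨π i, (mem_C0.mp hπ) i⟩, fun a b hab => π.injective (congrArg Subtype.val hab)⟩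

lemma sum_C0 (jm : β) (G : (α ↪ β) → ℝ) (G' : (α ↪ {j : β // j ≠ jm}) → ℝ)
    (hGG : ∀ π hπ, G π = G' (res0 jm π hπ)) :
    ∑ π ∈ C0 α jm, G π = ∑ σ : α ↪ {j : β // j ≠ jm}, G' σ := by
  classical
  refine Finset.sum_bij' (fun π hπ => res0 jm π hπ)
    (fun σ _ => σ.trans ⟨Subtype.val, Subtype.val_injective⟩) ?_ ?_ ?_ ?_ ?_
  · intro σ _; exact Finset.mem_univ _
  · intro σ _
    rw [mem_C0]
    exact fun i => (σ i).2
  · intro π hπ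
    exact Function.Embedding.ext fun i => rfl
  · intro σ _
    exact Function.Embedding.ext fun i => Subtype.ext rfl
  · intro π hπ
    exact hGG π hπ

lemma card_C0 (jm : β) : (C0 α jm).card = Fintype.card (α ↪ {j : β // j ≠ jm}) := by
  classical
  rw [← Finset.card_univ]
  exact Finset.card_bij' (fun π hπ => res0 jm π hπ)
    (fun σ _ => σ.trans ⟨Subtype.val, Subtype.val_injective⟩)
    (fun σ _ => Finset.mem_univ _)
    (fun σ _ => by rw [mem_C0]; exact fun i => (σ i).2)
    (fun π hπ => Function.Embedding.ext fun i => rfl)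
    (fun σ _ => Function.Embedding.ext fun i => Subtype.ext rfl)

/-- extension of an embedding on `{i // i ≠ k}` by sending `k` to `jm` -/
noncomputable def ExtK (jm : β) (k : α) (τ : {i : α // i ≠ k} ↪ {j : β // j ≠ jm}) : α ↪ β :=
  ⟨fun i => if h : i = k then jm else (τ ⟨i, h⟩).val, by
    intro a b hab
    dsimp only at hab
    split_ifs at hab with h1 h2 h2
    · exact h1.trans h2.symm
    · exact absurd hab.symm (τ ⟨b, h2⟩).2
    · exact absurd hab (τ ⟨a, h1⟩).2
    · exact congrArg Subtype.val (τ.injective (Subtype.ext hab))⟩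

noncomputable def resK (jm : β) (k : α) (π : α ↪ β) (hπ : π ∈ CK jm k) :
    {i : α // i ≠ k} ↪ {j : β // j ≠ jm} :=
  ⟨fun i => ⟨π i.val, fun hji => i.2 (π.injective (hji.trans (mem_CK.mp hπ).symm))⟩,
    fun a b hab => Subtype.ext (π.injective (congrArg Subtype.val hab))⟩

lemma sum_CK (jm : β) (k : α) (G : (α ↪ β) → ℝ)
    (G' : ({i : α // i ≠ k} ↪ {j : β // j ≠ jm}) → ℝ)
    (hGG : ∀ π hπ, G π = G' (resK jm k π hπ)) :
    ∑ π ∈ CK jm k, G π = ∑ τ : {i : α // i ≠ k} ↪ {j : β // j ≠ jm}, G' τ := by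
  classical
  refine Finset.sum_bij' (fun π hπ => resK jm k π hπ) (fun τ _ => ExtK jm k τ) ?_ ?_ ?_ ?_ ?_
  · intro π hπ; exact Finset.mem_univ _
  · intro τ _
    rw [mem_CK]
    exact dif_pos rfl
  · intro π hπ
    refine Function.Embedding.ext fun i => ?_
    show (if h : i = k then jm else _) = π i
    split_ifs with h
    · subst h; exact (mem_CK.mp hπ).symm
    · rfl
  · intro τ _
    refine Function.Embedding.ext fun i => Subtype.ext ?_
    show (ExtK jm k τ) i.val = _
    have : (ExtK jm k τ) i.val = (τ i).val := by
      show (if h : i.val = k then jm else (τ ⟨i.val, h⟩).val) = _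
      rw [dif_neg i.2]
    rw [this]
  · intro π hπ
    exact hGG π hπ

lemma card_CK (jm : β) (k : α) :
    (CK jm k : Finset (α ↪ β)).card = Fintype.card ({i : α // i ≠ k} ↪ {j : β // j ≠ jm}) := by
  classical
  rw [← Finset.card_univ]
  refine Finset.card_bij' (fun π hπ => resK jm k π hπ) (fun τ _ => ExtK jm k τ)
    (fun π hπ => Finset.mem_univ _) (fun τ _ => by rw [mem_CK]; exact dif_pos rfl) ?_ ?_
  · intro π hπ
    refine Function.Embedding.ext fun i => ?_
    show (if h : i = k then jm else _) = π i
    split_ifs with h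
    · subst h; exact (mem_CK.mp hπ).symm
    · rfl
  · intro τ _
    refine Function.Embedding.ext fun i => Subtype.ext ?_
    show (ExtK jm k τ) i.val = _
    have : (ExtK jm k τ) i.val = (τ i).val := by
      show (if h : i.val = k then jm else (τ ⟨i.val, h⟩).val) = _
      rw [dif_neg i.2]
    rw [this]


/-- replace the value at `k` by `jm` (for embeddings avoiding `jm`) -/
noncomputable def rmap (jm : β) (k : α) (π : α ↪ β) : α ↪ β :=
  if hπ : ∀ i, π i ≠ jm then
    ⟨fun i => if i = k then jm else π i, by
      intro a b hab
      dsimp only at hab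
      split_ifs at hab with h1 h2 h2
      · exact h1.trans h2.symm
      · exact absurd hab.symm (hπ b)
      · exact absurd hab (hπ a)
      · exact π.injective hab⟩
  else π

lemma rmap_apply {jm : β} {k : α} {π : α ↪ β} (hπ : ∀ i, π i ≠ jm) (i : α) :
    rmap jm k π i = if i = k then jm else π i := by
  rw [rmap, dif_pos hπ]; rfl

lemma rmap_mem {jm : β} {k : α} {π : α ↪ β} (hπ : π ∈ C0 α jm) : rmap jm k π ∈ CK jm k := by
  rw [mem_CK, rmap_apply (mem_C0.mp hπ), if_pos rfl]

/-- reconstruct an embedding in the fiber from the free value at `k` -/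
noncomputable def recon (jm : β) (k : α) (ρ : α ↪ β) (j : β) (hne : j ≠ jm)
    (hj : ∀ i, i ≠ k → ρ i ≠ j) : α ↪ β :=
  ⟨fun i => if i = k then j else ρ i, by
    intro a b hab
    dsimp only at hab
    split_ifs at hab with h1 h2 h2
    · exact h1.trans h2.symm
    · exact absurd hab.symm (hj b h2)
    · exact absurd hab (hj a h1)
    · exact ρ.injective hab⟩

lemma fiber_card (jm : β) (k : α) {ρ : α ↪ β} (hρ : ρ ∈ CK jm k) :
    ((C0 α jm).filter (fun π => rmap jm k π = ρ)).card = Fintype.card β - Fintype.card α := by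
  classical
  have hρk : ρ k = jm := mem_CK.mp hρ
  set A : Finset β := (Finset.univ : Finset β) \ insert jm ((Finset.univ.erase k).image ρ) with hA
  have hcardA : A.card = Fintype.card β - Fintype.card α := by
    rw [hA, Finset.card_sdiff_of_subset (Finset.subset_univ _), Finset.card_univ]
    have h1 : jm ∉ (Finset.univ.erase k).image ρ := by
      simp only [Finset.mem_image, Finset.mem_erase]
      rintro ⟨i, ⟨hik, -⟩, hi⟩
      exact hik (ρ.injective (hi.trans hρk.symm))
    rw [Finset.card_insert_of_notMem h1, Finset.card_image_of_injective _ ρ.injective,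
      Finset.card_erase_of_mem (Finset.mem_univ _), Finset.card_univ]
    have : 0 < Fintype.card α := Fintype.card_pos_iff.2 ⟨k⟩
    omega
  rw [← hcardA]
  have hmemA : ∀ j, j ∈ A ↔ (j ≠ jm ∧ ∀ i, i ≠ k → ρ i ≠ j) := by
    intro j
    simp only [hA, Finset.mem_sdiff, Finset.mem_univ, true_and, Finset.mem_insert,
      Finset.mem_image, Finset.mem_erase, not_or, not_exists]
    constructor
    · rintro ⟨h1, h2⟩
      exact ⟨h1, fun i hik hij => h2 i ⟨⟨hik, trivial⟩, hij⟩⟩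
    · rintro ⟨h1, h2⟩
      exact ⟨h1, fun i hi => h2 i hi.1.1 hi.2⟩
  refine Finset.card_bij' (fun π _ => π k)
    (fun j hj => recon jm k ρ j ((hmemA j).mp hj).1 ((hmemA j).mp hj).2) ?_ ?_ ?_ ?_
  -- forward membership
  · intro π hπ
    rw [Finset.mem_filter] at hπ
    obtain ⟨hπ0, hπρ⟩ := hπ
    have hπ0' := mem_C0.mp hπ0
    rw [hmemA]
    refine ⟨hπ0' k, fun i hik hi => ?_⟩
    have : ρ i = π i := by rw [← hπρ, rmap_apply hπ0', if_neg hik]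
    rw [this] at hi
    exact hik (π.injective hi)
  -- backward membership
  · intro j hj
    have hj1 := ((hmemA j).mp hj).1
    have hj2 := ((hmemA j).mp hj).2
    rw [Finset.mem_filter]
    have hmem0 : recon jm k ρ j hj1 hj2 ∈ C0 α jm := by
      rw [mem_C0]
      intro i
      show (if i = k then j else ρ i) ≠ jm
      split_ifs with h
      · exact hj1
      · exact fun hc => h (ρ.injective (hc.trans hρk.symm))
    refine ⟨hmem0, ?_⟩
    refine Function.Embedding.ext fun i => ?_
    rw [rmap_apply (mem_C0.mp hmem0)]
    show (if i = k then jm else if i = k then j else ρ i) = ρ i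
    split_ifs with h
    · rw [h, hρk]
    · rfl
  -- left inverse
  · intro π hπ
    rw [Finset.mem_filter] at hπ
    obtain ⟨hπ0, hπρ⟩ := hπ
    have hπ0' := mem_C0.mp hπ0
    refine Function.Embedding.ext fun i => ?_
    show (if i = k then π k else ρ i) = π i
    split_ifs with h
    · rw [h]
    · rw [← hπρ, rmap_apply hπ0', if_neg h]
  -- right inverse
  · intro j hj
    show (if k = k then j else ρ k) = j
    rw [if_pos rfl]

lemma sum_rmap (jm : β) (k : α) (F : (α ↪ β) → ℝ) :
    ∑ π ∈ C0 α jm, F (rmap jm k π)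
      = ((Fintype.card β - Fintype.card α : ℕ) : ℝ) * ∑ ρ ∈ CK jm k, F ρ := by
  classical
  rw [← Finset.sum_fiberwise_of_maps_to (g := rmap jm k) (t := CK jm k)
    (fun π hπ => rmap_mem hπ) (fun π => F (rmap jm k π))]
  rw [Finset.mul_sum]
  refine Finset.sum_congr rfl fun ρ hρ => ?_
  have h1 : ∀ π ∈ (C0 α jm).filter (fun π => rmap jm k π = ρ), F (rmap jm k π) = F ρ := by
    intro π hπ
    rw [(Finset.mem_filter.mp hπ).2]
  rw [Finset.sum_congr rfl h1, Finset.sum_const, fiber_card jm k hρ, nsmul_eq_mul]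


section claims

variable (x : β → ℝ) {f : (α → ℝ) → ℝ} {S : Finset α} {jm : β}
  (hjm : ∀ j, x j ≤ x jm) (hf : Monotone f) (hfS : DepOn f S)

include hjm hf hfS in
lemma F3_le {k : α} (hk : k ∈ S) :
    ∑ π ∈ C0 α jm, f (fun i => x (π i))
      ≤ ((Fintype.card β - Fintype.card α : ℕ) : ℝ)
          * ∑ ρ ∈ CK jm k, f (fun i => x (ρ i)) := by
  rw [← sum_rmap jm k (fun ρ => f (fun i => x (ρ i)))]
  refine Finset.sum_le_sum fun π hπ => ?_
  refine mono_le hf hfS fun i hi => ?_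
  rw [rmap_apply (mem_C0.mp hπ)]
  split_ifs with h
  · exact hjm _
  · exact le_refl _

include hfS in
lemma F3_eq {k : α} (hk : k ∉ S) :
    ∑ π ∈ C0 α jm, f (fun i => x (π i))
      = ((Fintype.card β - Fintype.card α : ℕ) : ℝ)
          * ∑ ρ ∈ CK jm k, f (fun i => x (ρ i)) := by
  rw [← sum_rmap jm k (fun ρ => f (fun i => x (ρ i)))]
  refine Finset.sum_congr rfl fun π hπ => ?_
  refine hfS _ _ fun i hi => ?_
  rw [rmap_apply (mem_C0.mp hπ)]
  rw [if_neg]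
  intro h
  rw [h] at hi
  exact hk hi

lemma CK_swap (k k' : α) (G : (α ↪ β) → ℝ) :
    ∑ π ∈ CK jm k', G ((Equiv.swap k k').toEmbedding.trans π) = ∑ π ∈ CK jm k, G π := by
  refine Finset.sum_bij' (fun π _ => (Equiv.swap k k').toEmbedding.trans π)
    (fun π _ => (Equiv.swap k k').toEmbedding.trans π) ?_ ?_ ?_ ?_ ?_
  · intro π hπ
    rw [mem_CK] at hπ ⊢
    show π (Equiv.swap k k' k) = jm
    rw [Equiv.swap_apply_left]
    exact hπ
  · intro π hπ
    rw [mem_CK] at hπ ⊢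
    show π (Equiv.swap k k' k') = jm
    rw [Equiv.swap_apply_right]
    exact hπ
  · intro π hπ
    exact Function.Embedding.ext fun i => by
      show π (Equiv.swap k k' (Equiv.swap k k' i)) = π i
      rw [Equiv.swap_apply_self]
  · intro π hπ
    exact Function.Embedding.ext fun i => by
      show π (Equiv.swap k k' (Equiv.swap k k' i)) = π i
      rw [Equiv.swap_apply_self]
  · intro π hπ; rfl

include hjm hf hfS in
lemma F2_le {k k' : α} (hk : k ∈ S) (hk' : k' ∉ S) :
    ∑ π ∈ CK jm k', f (fun i => x (π i)) ≤ ∑ π ∈ CK jm k, f (fun i => x (π i)) := by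
  rw [← CK_swap (jm := jm) k k' (fun π => f (fun i => x (π i)))]
  refine Finset.sum_le_sum fun π hπ => ?_
  refine mono_le hf hfS fun i hi => ?_
  show x (π i) ≤ x (π (Equiv.swap k k' i))
  by_cases h : i = k
  · subst h
    rw [Equiv.swap_apply_left, mem_CK.mp hπ]
    exact hjm _
  · have h' : i ≠ k' := fun hc => hk' (hc ▸ hi)
    rw [Equiv.swap_apply_of_ne_of_ne h h']

include hfS in
lemma F2_eq {k k' : α} (hk : k ∉ S) (hk' : k' ∉ S) :
    ∑ π ∈ CK jm k', f (fun i => x (π i)) = ∑ π ∈ CK jm k, f (fun i => x (π i)) := by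
  rw [← CK_swap (jm := jm) k k' (fun π => f (fun i => x (π i)))]
  refine Finset.sum_congr rfl fun π hπ => ?_
  refine hfS _ _ fun i hi => ?_
  show x (π i) = x (π (Equiv.swap k k' i))
  have h : i ≠ k := fun hc => hk (hc ▸ hi)
  have h' : i ≠ k' := fun hc => hk' (hc ▸ hi)
  rw [Equiv.swap_apply_of_ne_of_ne h h']

end claims


/-- lift a function on coordinates `α` to one on `{i // i ≠ k}`, fixing coordinate `k` at `x jm` -/
def fK (x : β → ℝ) (jm : β) (k : α) (f : (α → ℝ) → ℝ) : ({i : α // i ≠ k} → ℝ) → ℝ :=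
  fun u => f (fun i => if h : i = k then x jm else u ⟨i, h⟩)

lemma fK_mono {x : β → ℝ} {jm : β} {k : α} {f : (α → ℝ) → ℝ} (hf : Monotone f) :
    Monotone (fK x jm k f) := by
  intro u v huv
  refine hf fun i => ?_
  dsimp only
  split_ifs with h
  · exact le_refl _
  · exact huv _

lemma fK_dep {x : β → ℝ} {jm : β} {k : α} {f : (α → ℝ) → ℝ} {S : Finset α}
    (hfS : DepOn f S) : DepOn (fK x jm k f) (S.subtype (· ≠ k)) := by
  intro u v huv
  refine hfS _ _ fun i hi => ?_
  split_ifs with h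
  · rfl
  · exact huv ⟨i, h⟩ (Finset.mem_subtype.mpr hi)


lemma sum_fK (x : β → ℝ) (jm : β) (k : α) (f : (α → ℝ) → ℝ) :
    ∑ π ∈ CK jm k, f (fun i => x (π i))
      = ∑ τ : {i : α // i ≠ k} ↪ {j : β // j ≠ jm}, fK x jm k f (fun i' => x (τ i').val) := by
  refine sum_CK jm k _ _ fun π hπ => ?_
  show f _ = f _
  refine congrArg f (funext fun i => ?_)
  show x (π i) = if h : i = k then x jm else x ((resK jm k π hπ) ⟨i, h⟩).val
  by_cases h : i = k
  · rw [dif_pos h, h, mem_CK.mp hπ]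
  · rw [dif_neg h]; rfl

lemma triv {α β : Type} [Fintype α] [DecidableEq α] [Fintype β] [DecidableEq β]
    (x : β → ℝ) (f g : (α → ℝ) → ℝ) (S T : Finset α)
    (hfS : DepOn f S) (hgT : DepOn g T)
    (htriv : S = ∅ ∨ T = ∅ ∨ IsEmpty (α ↪ β)) :
    (Fintype.card (α ↪ β) : ℝ) * ∑ π : α ↪ β, f (fun i => x (π i)) * g (fun i => x (π i)) ≤
      (∑ π : α ↪ β, f (fun i => x (π i))) * (∑ π : α ↪ β, g (fun i => x (π i))) := by
  rcases htriv with hS | hT | hE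
  · obtain ⟨c, hc⟩ : ∃ c, ∀ u, f u = c :=
      ⟨f (fun _ => 0), fun u => hfS u _ (fun i hi => by
        rw [hS] at hi; exact absurd hi (Finset.notMem_empty i))⟩
    simp only [hc]
    rw [← Finset.mul_sum, Finset.sum_const, Finset.card_univ, nsmul_eq_mul]
    exact le_of_eq (by ring)
  · obtain ⟨c, hc⟩ : ∃ c, ∀ u, g u = c :=
      ⟨g (fun _ => 0), fun u => hgT u _ (fun i hi => by
        rw [hT] at hi; exact absurd hi (Finset.notMem_empty i))⟩
    simp only [hc]
    rw [← Finset.sum_mul, Finset.sum_const, Finset.card_univ, nsmul_eq_mul]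
    exact le_of_eq (by ring)
  · have h1 : (Finset.univ : Finset (α ↪ β)) = ∅ := Finset.univ_eq_empty
    simp [h1]

lemma key : ∀ (Nb : ℕ) {β : Type} [Fintype β] [DecidableEq β], Fintype.card β ≤ Nb →
    ∀ {α : Type} [Fintype α] [DecidableEq α] (x : β → ℝ)
      (f g : (α → ℝ) → ℝ) (S T : Finset α), Disjoint S T →
      DepOn f S → DepOn g T → Monotone f → Monotone g →
      (Fintype.card (α ↪ β) : ℝ) * ∑ π : α ↪ β, f (fun i => x (π i)) * g (fun i => x (π i)) ≤
        (∑ π : α ↪ β, f (fun i => x (π i))) * (∑ π : α ↪ β, g (fun i => x (π i))) := by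
  intro Nb
  induction Nb with
  | zero =>
    intro β _ _ hβ α _ _ x f g S T hST hfS hgT hf hg
    by_cases hS0 : S = ∅
    · exact triv x f g S T hfS hgT (Or.inl hS0)
    obtain ⟨k1, hk1S⟩ := Finset.nonempty_iff_ne_empty.mpr hS0
    have hβe : IsEmpty β := Fintype.card_eq_zero_iff.mp (Nat.le_zero.mp hβ)
    exact triv x f g S T hfS hgT (Or.inr (Or.inr ⟨fun π => (hβe.false (π k1)).elim⟩))
  | succ Nb ih =>
    intro β _ _ hcard α _ _ x f g S T hST hfS hgT hf hg
    by_cases hS0 : S = ∅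
    · exact triv x f g S T hfS hgT (Or.inl hS0)
    by_cases hT0 : T = ∅
    · exact triv x f g S T hfS hgT (Or.inr (Or.inl hT0))
    by_cases hE : IsEmpty (α ↪ β)
    · exact triv x f g S T hfS hgT (Or.inr (Or.inr hE))
    rw [not_isEmpty_iff] at hE
    obtain ⟨π0⟩ := hE
    obtain ⟨k1, hk1S⟩ := Finset.nonempty_iff_ne_empty.mpr hS0
    obtain ⟨k0, hk0T⟩ := Finset.nonempty_iff_ne_empty.mpr hT0
    obtain ⟨jm, -, hjm'⟩ := Finset.exists_max_image Finset.univ x ⟨π0 k1, Finset.mem_univ _⟩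
    have hjm : ∀ j, x j ≤ x jm := fun j => hjm' j (Finset.mem_univ j)
    have hd1 : 1 ≤ Fintype.card α := Fintype.card_pos_iff.mpr ⟨k1⟩
    have hdB : Fintype.card α ≤ Fintype.card β := Fintype.card_le_of_embedding π0
    have hβ'card : Fintype.card {j : β // j ≠ jm} = Fintype.card β - 1 := by
      have := Fintype.card_subtype_compl (fun j : β => j = jm)
      simpa [Fintype.card_subtype_eq] using this
    have hα'card : ∀ k : α, Fintype.card {i : α // i ≠ k} = Fintype.card α - 1 := by
      intro k
      have := Fintype.card_subtype_compl (fun i : α => i = k)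
      simpa [Fintype.card_subtype_eq] using this
    have hβ'le : Fintype.card {j : β // j ≠ jm} ≤ Nb := by
      rw [hβ'card]; omega
    have hMk : ∀ k : α, ((CK jm k : Finset (α ↪ β))).card
        = (Fintype.card β - 1).descFactorial (Fintype.card α - 1) := by
      intro k
      rw [card_CK, Fintype.card_embedding_eq, hβ'card, hα'card]
    have hM0 : (C0 α jm).card
        = (Fintype.card β - Fintype.card α)
            * (Fintype.card β - 1).descFactorial (Fintype.card α - 1) := by
      rw [card_C0, Fintype.card_embedding_eq, hβ'card]
      obtain ⟨e, he⟩ : ∃ e, Fintype.card α = e + 1 := ⟨Fintype.card α - 1, by omega⟩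
      rw [he, Nat.descFactorial_succ]
      have h1 : Fintype.card β - 1 - e = Fintype.card β - (e + 1) := by omega
      have h2 : e + 1 - 1 = e := by omega
      rw [h1, h2]
    have hNcard : Fintype.card (α ↪ β)
        = Fintype.card β * (Fintype.card β - 1).descFactorial (Fintype.card α - 1) := by
      rw [Fintype.card_embedding_eq]
      obtain ⟨e, he⟩ : ∃ e, Fintype.card α = e + 1 := ⟨Fintype.card α - 1, by omega⟩
      obtain ⟨b1, hb1⟩ : ∃ b1, Fintype.card β = b1 + 1 := ⟨Fintype.card β - 1, by omega⟩
      rw [he, hb1, Nat.succ_descFactorial_succ]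
      have h2 : b1 + 1 - 1 = b1 := by omega
      have h3 : e + 1 - 1 = e := by omega
      rw [h2, h3]
    have hM'pos : 0 < (Fintype.card β - 1).descFactorial (Fintype.card α - 1) :=
      Nat.pos_of_ne_zero (by
        simp only [ne_eq, Nat.descFactorial_eq_zero_iff_lt, not_lt]
        omega)
    -- transfer of sums over C0
    have t0 : ∀ h : (α → ℝ) → ℝ, ∑ π ∈ C0 α jm, h (fun i => x (π i))
        = ∑ σ : α ↪ {j : β // j ≠ jm}, h (fun i => x (σ i).val) := by
      intro h
      exact sum_C0 jm _ _ (fun π hπ => rfl)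
    have hembcard0 : Fintype.card (α ↪ {j : β // j ≠ jm})
        = (Fintype.card β - Fintype.card α)
            * (Fintype.card β - 1).descFactorial (Fintype.card α - 1) :=
      (card_C0 (α := α) jm).symm.trans hM0
    have e0p : ∑ π ∈ C0 α jm, f (fun i => x (π i)) * g (fun i => x (π i))
        = ∑ σ : α ↪ {j : β // j ≠ jm}, f (fun i => x (σ i).val) * g (fun i => x (σ i).val) :=
      t0 (fun u => f u * g u)
    have e0f : ∑ π ∈ C0 α jm, f (fun i => x (π i))
        = ∑ σ : α ↪ {j : β // j ≠ jm}, f (fun i => x (σ i).val) := t0 f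
    have e0g : ∑ π ∈ C0 α jm, g (fun i => x (π i))
        = ∑ σ : α ↪ {j : β // j ≠ jm}, g (fun i => x (σ i).val) := t0 g
    have hIH0 : (((Fintype.card β - Fintype.card α)
          * (Fintype.card β - 1).descFactorial (Fintype.card α - 1) : ℕ) : ℝ)
        * (∑ π ∈ C0 α jm, f (fun i => x (π i)) * g (fun i => x (π i)))
        ≤ (∑ π ∈ C0 α jm, f (fun i => x (π i))) * (∑ π ∈ C0 α jm, g (fun i => x (π i))) := by
      have h1 := ih hβ'le (fun j : {j : β // j ≠ jm} => x j.val) f g S T hST hfS hgT hf hg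
      rw [e0p, e0f, e0g, ← hembcard0]
      exact h1
    -- IH over the fibers
    have hIHk : ∀ k : α, ((Fintype.card β - 1).descFactorial (Fintype.card α - 1) : ℝ)
        * (∑ π ∈ CK jm k, f (fun i => x (π i)) * g (fun i => x (π i)))
        ≤ (∑ π ∈ CK jm k, f (fun i => x (π i))) * (∑ π ∈ CK jm k, g (fun i => x (π i))) := by
      intro k
      have hdisj : Disjoint (S.subtype (· ≠ k)) (T.subtype (· ≠ k)) := by
        rw [Finset.disjoint_left]
        intro a haS haT
        rw [Finset.mem_subtype] at haS haT
        exact Finset.disjoint_left.mp hST haS haT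
      have h1 := ih hβ'le (fun j : {j : β // j ≠ jm} => x j.val) (fK x jm k f) (fK x jm k g)
        (S.subtype (· ≠ k)) (T.subtype (· ≠ k)) hdisj (fK_dep hfS) (fK_dep hgT)
        (fK_mono hf) (fK_mono hg)
      have ep : ∑ π ∈ CK jm k, f (fun i => x (π i)) * g (fun i => x (π i))
          = ∑ τ : {i : α // i ≠ k} ↪ {j : β // j ≠ jm},
              fK x jm k f (fun i' => x (τ i').val) * fK x jm k g (fun i' => x (τ i').val) :=
        sum_fK x jm k (fun u => f u * g u)
      have ef : ∑ π ∈ CK jm k, f (fun i => x (π i))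
          = ∑ τ : {i : α // i ≠ k} ↪ {j : β // j ≠ jm}, fK x jm k f (fun i' => x (τ i').val) :=
        sum_fK x jm k f
      have eg : ∑ π ∈ CK jm k, g (fun i => x (π i))
          = ∑ τ : {i : α // i ≠ k} ↪ {j : β // j ≠ jm}, fK x jm k g (fun i' => x (τ i').val) :=
        sum_fK x jm k g
      have hcardk : Fintype.card ({i : α // i ≠ k} ↪ {j : β // j ≠ jm})
          = (Fintype.card β - 1).descFactorial (Fintype.card α - 1) := by
        rw [Fintype.card_embedding_eq, hβ'card, hα'card]
      rw [ep, ef, eg, ← hcardk]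
      exact h1
    -- comparison facts
    have hF3f_le : ∀ k ∈ S, ∑ π ∈ C0 α jm, f (fun i => x (π i))
        ≤ ((Fintype.card β - Fintype.card α : ℕ) : ℝ)
            * ∑ π ∈ CK jm k, f (fun i => x (π i)) :=
      fun k hk => F3_le x hjm hf hfS hk
    have hF3f_eq : ∀ k ∉ S, ∑ π ∈ C0 α jm, f (fun i => x (π i))
        = ((Fintype.card β - Fintype.card α : ℕ) : ℝ)
            * ∑ π ∈ CK jm k, f (fun i => x (π i)) :=
      fun k hk => F3_eq x hfS hk
    have hF3g_le : ∀ k ∈ T, ∑ π ∈ C0 α jm, g (fun i => x (π i))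
        ≤ ((Fintype.card β - Fintype.card α : ℕ) : ℝ)
            * ∑ π ∈ CK jm k, g (fun i => x (π i)) :=
      fun k hk => F3_le x hjm hg hgT hk
    have hF3g_eq : ∀ k ∉ T, ∑ π ∈ C0 α jm, g (fun i => x (π i))
        = ((Fintype.card β - Fintype.card α : ℕ) : ℝ)
            * ∑ π ∈ CK jm k, g (fun i => x (π i)) :=
      fun k hk => F3_eq x hgT hk
    have hF2f_le : ∀ k ∈ S, ∀ k' ∉ S, ∑ π ∈ CK jm k', f (fun i => x (π i))
        ≤ ∑ π ∈ CK jm k, f (fun i => x (π i)) :=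
      fun k hk k' hk' => F2_le x hjm hf hfS hk hk'
    have hF2f_eq : ∀ k ∉ S, ∀ k' ∉ S, ∑ π ∈ CK jm k', f (fun i => x (π i))
        = ∑ π ∈ CK jm k, f (fun i => x (π i)) :=
      fun k hk k' hk' => F2_eq x hfS hk hk'
    have hF2g_le : ∀ k ∈ T, ∀ k' ∉ T, ∑ π ∈ CK jm k', g (fun i => x (π i))
        ≤ ∑ π ∈ CK jm k, g (fun i => x (π i)) :=
      fun k hk k' hk' => F2_le x hjm hg hgT hk hk'
    have hF2g_eq : ∀ k ∉ T, ∀ k' ∉ T, ∑ π ∈ CK jm k', g (fun i => x (π i))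
        = ∑ π ∈ CK jm k, g (fun i => x (π i)) :=
      fun k hk k' hk' => F2_eq x hgT hk hk'
    -- split the sums in the goal
    have hs1 : (∑ π : α ↪ β, f (fun i => x (π i)) * g (fun i => x (π i)))
        = ∑ π ∈ C0 α jm, f (fun i => x (π i)) * g (fun i => x (π i))
          + ∑ k : α, ∑ π ∈ CK jm k, f (fun i => x (π i)) * g (fun i => x (π i)) :=
      split_sum jm _
    have hs2 : (∑ π : α ↪ β, f (fun i => x (π i)))
        = ∑ π ∈ C0 α jm, f (fun i => x (π i))
          + ∑ k : α, ∑ π ∈ CK jm k, f (fun i => x (π i)) :=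
      split_sum jm _
    have hs3 : (∑ π : α ↪ β, g (fun i => x (π i)))
        = ∑ π ∈ C0 α jm, g (fun i => x (π i))
          + ∑ k : α, ∑ π ∈ CK jm k, g (fun i => x (π i)) :=
      split_sum jm _
    rw [hs1, hs2, hs3]
    have hNr : (Fintype.card (α ↪ β) : ℝ)
        = (Fintype.card β : ℝ)
            * ((Fintype.card β - 1).descFactorial (Fintype.card α - 1) : ℝ) := by
      rw [hNcard]; push_cast; ring
    by_cases hceq : Fintype.card β = Fintype.card α
    · -- no room left : the embeddings are bijections
      have hC0e : C0 α jm = ∅ := by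
        apply Finset.card_eq_zero.mp
        rw [hM0, hceq, Nat.sub_self, zero_mul]
      rw [hC0e]
      simp only [Finset.sum_empty, zero_add]
      refine algebra2 S T (fun k => ∑ π ∈ CK jm k, f (fun i => x (π i)))
        (fun k => ∑ π ∈ CK jm k, g (fun i => x (π i)))
        (fun k => ∑ π ∈ CK jm k, f (fun i => x (π i)) * g (fun i => x (π i)))
        ((Fintype.card β - 1).descFactorial (Fintype.card α - 1) : ℝ)
        (Fintype.card (α ↪ β) : ℝ) k0 k1 hk0T hk1S hST ?_ ?_ ?_ ?_ ?_ ?_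
      · rw [hNr, hceq]
      · exact hIHk
      · exact hF2f_le
      · exact hF2f_eq
      · exact hF2g_le
      · exact hF2g_eq
    · have hlt : Fintype.card α < Fintype.card β :=
        lt_of_le_of_ne hdB (fun h => hceq h.symm)
      refine algebra1 S T (fun k => ∑ π ∈ CK jm k, f (fun i => x (π i)))
        (fun k => ∑ π ∈ CK jm k, g (fun i => x (π i)))
        (fun k => ∑ π ∈ CK jm k, f (fun i => x (π i)) * g (fun i => x (π i)))
        (∑ π ∈ C0 α jm, f (fun i => x (π i))) (∑ π ∈ C0 α jm, g (fun i => x (π i)))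
        (∑ π ∈ C0 α jm, f (fun i => x (π i)) * g (fun i => x (π i)))
        ((Fintype.card β - Fintype.card α : ℕ) : ℝ)
        ((Fintype.card β - 1).descFactorial (Fintype.card α - 1) : ℝ)
        (Fintype.card (α ↪ β) : ℝ) hST ?_ ?_ ?_ ?_ ?_ ?_ ?_ ?_
      · exact_mod_cast Nat.sub_pos_of_lt hlt
      · rw [hNr, Nat.cast_sub hdB]
        push_cast
        ring
      · have hcast : (((Fintype.card β - Fintype.card α)
            * (Fintype.card β - 1).descFactorial (Fintype.card α - 1) : ℕ) : ℝ)
            = ((Fintype.card β - Fintype.card α : ℕ) : ℝ)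
                * ((Fintype.card β - 1).descFactorial (Fintype.card α - 1) : ℝ) := by
          push_cast; ring
        rw [← hcast]
        exact hIH0
      · exact hIHk
      · exact hF3f_le
      · exact hF3f_eq
      · exact hF3g_le
      · exact hF3g_eq

end NAaux

theorem stmt2 (m n : ℕ) (hnm : n ≤ m) (x : Fin m → ℝ) (hx : ∀ i, 0 ≤ x i)
    (f g : (Fin n → ℝ) → ℝ) (S T : Finset (Fin n)) (hST : Disjoint S T)
    (hfS : DependsOnCoords f S) (hgT : DependsOnCoords g T)
    (hmono : (Monotone f ∧ Monotone g) ∨ (Antitone f ∧ Antitone g)) :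
    (∑ π : Fin n ↪ Fin m, f (fun i => x (π i)) * g (fun i => x (π i))) /
        (Fintype.card (Fin n ↪ Fin m) : ℝ) ≤
      ((∑ π : Fin n ↪ Fin m, f (fun i => x (π i))) / (Fintype.card (Fin n ↪ Fin m) : ℝ)) *
        ((∑ π : Fin n ↪ Fin m, g (fun i => x (π i))) / (Fintype.card (Fin n ↪ Fin m) : ℝ)) := by
  classical
  have hN0 : 0 < Fintype.card (Fin n ↪ Fin m) := by
    rw [Fintype.card_embedding_eq]
    refine Nat.pos_of_ne_zero ?_
    simp only [ne_eq, Nat.descFactorial_eq_zero_iff_lt, not_lt, Fintype.card_fin]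
    omega
  have hNR : (0 : ℝ) < (Fintype.card (Fin n ↪ Fin m) : ℝ) := by exact_mod_cast hN0
  have key' : (Fintype.card (Fin n ↪ Fin m) : ℝ)
      * (∑ π : Fin n ↪ Fin m, f (fun i => x (π i)) * g (fun i => x (π i)))
      ≤ (∑ π : Fin n ↪ Fin m, f (fun i => x (π i)))
          * (∑ π : Fin n ↪ Fin m, g (fun i => x (π i))) := by
    rcases hmono with ⟨hfm, hgm⟩ | ⟨hfa, hga⟩
    · exact NAaux.key m (by simp) x f g S T hST hfS hgT hfm hgm
    · have hfm : Monotone (fun u : Fin n → ℝ => f (fun i => - u i)) := by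
        intro u v huv
        exact hfa (fun i => neg_le_neg (huv i))
      have hgm : Monotone (fun u : Fin n → ℝ => g (fun i => - u i)) := by
        intro u v huv
        exact hga (fun i => neg_le_neg (huv i))
      have hfd : NAaux.DepOn (fun u : Fin n → ℝ => f (fun i => - u i)) S := by
        intro u v huv
        exact hfS _ _ (fun i hi => by rw [huv i hi])
      have hgd : NAaux.DepOn (fun u : Fin n → ℝ => g (fun i => - u i)) T := by
        intro u v huv
        exact hgT _ _ (fun i hi => by rw [huv i hi])
      have h1 := NAaux.key m (by simp) (fun j => - x j)
        (fun u : Fin n → ℝ => f (fun i => - u i)) (fun u : Fin n → ℝ => g (fun i => - u i))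
        S T hST hfd hgd hfm hgm
      simp only [neg_neg] at h1
      exact h1
  rw [div_mul_div_comm, div_le_div_iff₀ hNR (by positivity)]
  calc (∑ π : Fin n ↪ Fin m, f (fun i => x (π i)) * g (fun i => x (π i)))
        * ((Fintype.card (Fin n ↪ Fin m) : ℝ) * (Fintype.card (Fin n ↪ Fin m) : ℝ))
      = ((Fintype.card (Fin n ↪ Fin m) : ℝ)
          * (∑ π : Fin n ↪ Fin m, f (fun i => x (π i)) * g (fun i => x (π i))))
          * (Fintype.card (Fin n ↪ Fin m) : ℝ) := by ring
    _ ≤ ((∑ π : Fin n ↪ Fin m, f (fun i => x (π i)))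
          * (∑ π : Fin n ↪ Fin m, g (fun i => x (π i))))
          * (Fintype.card (Fin n ↪ Fin m) : ℝ) :=
        mul_le_mul_of_nonneg_right key' (le_of_lt hNR)
end

section
/- In any connection schedule on N nodes, if every node can reach every other node within L timesteps using routing paths of at most g physical hops, then ∑_{i=0}^{g} C(L,i) ≥ N, and consequently L = Ω(g·N^{1/g}). -/
open scoped Classical

/-- The position of a message that starts at node `a` at time `0` and, at each timestep `t`,
traverses the physical edge of the connection schedule `π` if `b t = true` and waits
otherwise. -/
def pos {N : ℕ} (π : ℕ → Equiv.Perm (Fin N)) (b : ℕ → Bool) (a : Fin N) : ℕ → Fin N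
  | 0 => a
  | t + 1 => if b t then (π t) (pos π b a t) else pos π b a t

theorem pos_congr {N : ℕ} (π : ℕ → Equiv.Perm (Fin N)) (f f' : ℕ → Bool) (a : Fin N)
    (t : ℕ) (h : ∀ s < t, f s = f' s) : pos π f a t = pos π f' a t := by
  induction t with
  | zero => rfl
  | succ t ih =>
    have ht : f t = f' t := h t (Nat.lt_succ_self t)
    have h2 := ih (fun s hs => h s (hs.trans (Nat.lt_succ_self t)))
    simp [pos, ht, h2]

theorem stmt19 : ∃ c : ℝ, 0 < c ∧
    ∀ (N L g : ℕ) (π : ℕ → Equiv.Perm (Fin N)), 0 < g → g ≤ L →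
      (∀ a b : Fin N, ∃ f : ℕ → Bool,
          ((Finset.range L).filter (fun t => f t = true)).card ≤ g ∧ pos π f a L = b) →
      N ≤ ∑ i ∈ Finset.range (g + 1), Nat.choose L i ∧
        c * ((g : ℝ) * (N : ℝ) ^ ((1 : ℝ) / (g : ℝ))) ≤ (L : ℝ) := by
  refine ⟨(Real.exp 1)⁻¹, by positivity, ?_⟩
  intro N L g π hg hgL hroute
  have hL : 0 < L := lt_of_lt_of_le hg hgL
  -- Part 1: the counting bound
  have hN : N ≤ ∑ i ∈ Finset.range (g + 1), Nat.choose L i := by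
    rcases Nat.eq_zero_or_pos N with h0 | hNpos
    · simp [h0]
    set a : Fin N := ⟨0, hNpos⟩ with ha
    choose f hf hpos using hroute a
    set F : Fin N → Finset ℕ := fun b => (Finset.range L).filter (fun t => f b t = true)
      with hF
    set S := (Finset.range (g + 1)).biUnion (fun i => (Finset.range L).powersetCard i)
      with hS
    have hmem : ∀ b, F b ∈ S := by
      intro b
      simp only [hS, Finset.mem_biUnion, Finset.mem_range, Finset.mem_powersetCard]
      exact ⟨(F b).card, Nat.lt_succ_of_le (hf b), Finset.filter_subset _ _, rfl⟩
    have hinj : ∀ b1 ∈ Finset.univ, ∀ b2 ∈ Finset.univ, F b1 = F b2 → b1 = b2 := by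
      intro b1 _ b2 _ hEq
      have hp : pos π (f b1) a L = pos π (f b2) a L := by
        apply pos_congr
        intro s hsL
        have h1 := Finset.ext_iff.mp hEq s
        simp only [hF, Finset.mem_filter, Finset.mem_range] at h1
        cases hb1 : f b1 s <;> cases hb2 : f b2 s <;> simp_all
      rw [hpos b1, hpos b2] at hp
      exact hp
    have hcard : S.card = ∑ i ∈ Finset.range (g + 1), Nat.choose L i := by
      rw [Finset.card_biUnion]
      · refine Finset.sum_congr rfl fun i _ => ?_
        rw [Finset.card_powersetCard, Finset.card_range]
      · intro i _ j _ hij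
        refine Finset.disjoint_left.mpr fun s hsi hsj => hij ?_
        rw [Finset.mem_powersetCard] at hsi hsj
        rw [← hsi.2, ← hsj.2]
    calc N = (Finset.univ : Finset (Fin N)).card := by simp
      _ ≤ S.card := Finset.card_le_card_of_injOn F (fun b _ => hmem b) hinj
      _ = _ := hcard
  refine ⟨hN, ?_⟩
  -- Part 2: the analytic consequence
  have hgR : (0 : ℝ) < g := by exact_mod_cast hg
  have hLR : (0 : ℝ) < L := by exact_mod_cast hL
  set x : ℝ := (g : ℝ) / L with hx
  have hx0 : 0 < x := by positivity
  have hx1 : x ≤ 1 := by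
    rw [hx, div_le_one hLR]; exact_mod_cast hgL
  have hxL : x * L = g := by rw [hx]; field_simp
  -- ∑ C(L,i) * x^g ≤ exp g
  have key : (∑ i ∈ Finset.range (g + 1), (Nat.choose L i : ℝ)) * x ^ g ≤ Real.exp g := by
    have h1 : (∑ i ∈ Finset.range (g + 1), (Nat.choose L i : ℝ)) * x ^ g
        ≤ ∑ i ∈ Finset.range (g + 1), (Nat.choose L i : ℝ) * x ^ i := by
      rw [Finset.sum_mul]
      refine Finset.sum_le_sum fun i hi => ?_
      have hig : i ≤ g := Nat.lt_succ_iff.mp (Finset.mem_range.mp hi)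
      exact mul_le_mul_of_nonneg_left (pow_le_pow_of_le_one hx0.le hx1 hig)
        (by positivity)
    have h2 : ∑ i ∈ Finset.range (g + 1), (Nat.choose L i : ℝ) * x ^ i
        ≤ ∑ i ∈ Finset.range (L + 1), (Nat.choose L i : ℝ) * x ^ i := by
      refine Finset.sum_le_sum_of_subset_of_nonneg
        (Finset.range_subset_range.mpr (by omega)) (fun i _ _ => by positivity)
    have h3 : ∑ i ∈ Finset.range (L + 1), (Nat.choose L i : ℝ) * x ^ i = (1 + x) ^ L := by
      rw [show (1:ℝ) + x = x + 1 by ring, add_pow]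
      refine Finset.sum_congr rfl fun i _ => ?_
      rw [one_pow]; ring
    have h4 : (1 + x) ^ L ≤ Real.exp g := by
      calc (1 + x) ^ L ≤ (Real.exp x) ^ L := by
            refine pow_le_pow_left₀ (by positivity) ?_ L
            linarith [Real.add_one_le_exp x]
        _ = Real.exp (x * L) := by rw [← Real.exp_nat_mul x L, mul_comm]
        _ = Real.exp g := by rw [hxL]
    linarith
  -- N ≤ (e L / g)^g
  have hM : (0:ℝ) < Real.exp 1 * L / g := by positivity
  have hNle : (N : ℝ) ≤ (Real.exp 1 * L / g) ^ g := by
    have hs : (N : ℝ) ≤ ∑ i ∈ Finset.range (g + 1), (Nat.choose L i : ℝ) := by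
      exact_mod_cast hN
    have hxg : (0:ℝ) < x ^ g := by positivity
    have := le_div_iff₀ hxg |>.mpr (le_trans (mul_le_mul_of_nonneg_right hs hxg.le) key)
    calc (N : ℝ) ≤ Real.exp g / x ^ g := this
      _ = (Real.exp 1 * L / g) ^ g := by
          rw [div_eq_iff (ne_of_gt hxg), ← mul_pow]
          have hc : Real.exp 1 * ↑L / ↑g * x = Real.exp 1 := by
            rw [hx]; field_simp
          rw [hc, ← Real.exp_nat_mul, mul_one]
  have hroot : (N : ℝ) ^ ((1:ℝ)/g) ≤ Real.exp 1 * L / g := by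
    have h := Real.rpow_le_rpow (by positivity) hNle (by positivity : (0:ℝ) ≤ 1/g)
    calc (N : ℝ) ^ ((1:ℝ)/g) ≤ ((Real.exp 1 * L / g) ^ g) ^ ((1:ℝ)/g) := h
      _ = Real.exp 1 * L / g := by
          rw [← Real.rpow_natCast (Real.exp 1 * L / g) g, ← Real.rpow_mul hM.le]
          rw [mul_one_div_cancel (ne_of_gt hgR), Real.rpow_one]
  calc (Real.exp 1)⁻¹ * ((g:ℝ) * (N:ℝ) ^ ((1:ℝ)/g))
      ≤ (Real.exp 1)⁻¹ * ((g:ℝ) * (Real.exp 1 * L / g)) := by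
        refine mul_le_mul_of_nonneg_left (mul_le_mul_of_nonneg_left hroot hgR.le) (by positivity)
    _ = L := by field_simp
end
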